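/- For any linear forms ℓ_1,...,ℓ_s in Q*, one has ann(u_{ℓ_1},...,u_{ℓ_s}) = I if and only if ℓ_1,...,ℓ_s generate Q* as a Q-module. -/

import Mathlib

open MvPolynomial

set_option maxHeartbeats 1000000

/-- `⟨u ∣ f⟩ = ∑_m f_m u(m)`, the pairing of a sequence `u : ℕ^n → K`
with a polynomial `f ∈ K[X_1,…,X_n]`. -/
noncomputable def seqBracket {K : Type*} [Field K] {n : ℕ}
    (u : (Fin n →₀ ℕ) → K) (f : MvPolynomial (Fin n) K) : K :=
  ∑ m ∈ f.support, f.coeff m * u m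

/-- The action of polynomials on sequences: `(f·u)(m) = ⟨u ∣ X^m f⟩`. -/
noncomputable def seqAct {K : Type*} [Field K] {n : ℕ}
    (f : MvPolynomial (Fin n) K) (u : (Fin n →₀ ℕ) → K) : (Fin n →₀ ℕ) → K :=
  fun m => seqBracket u (monomial m 1 * f)

/-- The sequence `u_ℓ(m) = ℓ(X^m mod I)` attached to a linear form `ℓ` on `K[X]/I`. -/
noncomputable def useq {K : Type*} [Field K] {n : ℕ}
    (I : Ideal (MvPolynomial (Fin n) K))
    (ℓ : Module.Dual K (MvPolynomial (Fin n) K ⧸ I)) : (Fin n →₀ ℕ) → K :=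
  fun m => ℓ (Ideal.Quotient.mk I (monomial m 1))

lemma seqBracket_useq {K : Type*} [Field K] {n : ℕ} (I : Ideal (MvPolynomial (Fin n) K))
    (ℓ : Module.Dual K (MvPolynomial (Fin n) K ⧸ I)) (f : MvPolynomial (Fin n) K) :
    seqBracket (useq I ℓ) f = ℓ (Ideal.Quotient.mk I f) := by
  set L : MvPolynomial (Fin n) K →ₗ[K] K :=
    ℓ ∘ₗ (Ideal.Quotient.mkₐ K I).toLinearMap with hL
  have hmk : ∀ g : MvPolynomial (Fin n) K, ℓ (Ideal.Quotient.mk I g) = L g := fun g => rfl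
  rw [hmk]
  conv_rhs => rw [f.as_sum]
  rw [map_sum]
  unfold seqBracket useq
  refine Finset.sum_congr rfl fun m _ => ?_
  have h : (monomial m (coeff m f) : MvPolynomial (Fin n) K) = coeff m f • monomial m 1 := by
    rw [smul_monomial, smul_eq_mul, mul_one]
  rw [h, map_smul, smul_eq_mul, hmk]

lemma useq_eq_zero_iff {K : Type*} [Field K] {n : ℕ} (I : Ideal (MvPolynomial (Fin n) K))
    (ℓ : Module.Dual K (MvPolynomial (Fin n) K ⧸ I)) :
    useq I ℓ = 0 ↔ ℓ = 0 := by
  constructor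
  · intro h
    ext q
    obtain ⟨g, rfl⟩ := Ideal.Quotient.mk_surjective q
    rw [← seqBracket_useq, h]
    simp [seqBracket]
  · intro h
    funext m
    simp [useq, h]

lemma seqAct_useq {K : Type*} [Field K] {n : ℕ} (I : Ideal (MvPolynomial (Fin n) K))
    (ℓ : Module.Dual K (MvPolynomial (Fin n) K ⧸ I)) (f : MvPolynomial (Fin n) K) :
    seqAct f (useq I ℓ) =
      useq I (ℓ.comp (LinearMap.mulLeft K (Ideal.Quotient.mk I f))) := by
  funext m
  show seqBracket (useq I ℓ) (monomial m 1 * f) = _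
  rw [seqBracket_useq]
  simp only [useq, LinearMap.comp_apply, LinearMap.mulLeft_apply]
  rw [map_mul, mul_comm]

/-- The linear parametrization `g ↦ ∑ i, g_i · ℓ_i` of combinations of the `ℓ_i`. -/
noncomputable def Lmap {K : Type*} [Field K] {n : ℕ}
    (I : Ideal (MvPolynomial (Fin n) K)) (s : ℕ)
    (ℓ : Fin s → Module.Dual K (MvPolynomial (Fin n) K ⧸ I)) :
    (Fin s → MvPolynomial (Fin n) K ⧸ I) →ₗ[K]
      Module.Dual K (MvPolynomial (Fin n) K ⧸ I) where
  toFun g := ∑ i, (ℓ i).comp (LinearMap.mulLeft K (g i))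
  map_add' a b := by
    rw [← Finset.sum_add_distrib]
    refine Finset.sum_congr rfl fun i _ => ?_
    ext h
    simp [add_mul]
  map_smul' c a := by
    simp only [RingHom.id_apply]
    rw [Finset.smul_sum]
    refine Finset.sum_congr rfl fun i _ => ?_
    ext h
    simp [smul_mul_assoc]

lemma Lmap_apply {K : Type*} [Field K] {n : ℕ}
    (I : Ideal (MvPolynomial (Fin n) K)) (s : ℕ)
    (ℓ : Fin s → Module.Dual K (MvPolynomial (Fin n) K ⧸ I))
    (g : Fin s → MvPolynomial (Fin n) K ⧸ I) :
    Lmap I s ℓ g = ∑ i, (ℓ i).comp (LinearMap.mulLeft K (g i)) := rfl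

/-- For linear forms `ℓ_1,…,ℓ_s ∈ Q*`, one has
`ann(u_{ℓ_1},…,u_{ℓ_s}) = I` if and only if `ℓ_1,…,ℓ_s` generate `Q*` as a
`Q`-module (every `φ ∈ Q*` can be written `φ = ∑ g_i·ℓ_i` with `g_i ∈ Q`,
where `(g·ℓ)(h) = ℓ(gh)`). -/
theorem stmt4 {K : Type*} [Field K] {n : ℕ} (hn : 1 ≤ n)
    (I : Ideal (MvPolynomial (Fin n) K))
    (hI : FiniteDimensional K (MvPolynomial (Fin n) K ⧸ I))
    (s : ℕ) (ℓ : Fin s → Module.Dual K (MvPolynomial (Fin n) K ⧸ I)) :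
    (∀ f : MvPolynomial (Fin n) K,
        (∀ i, seqAct f (useq I (ℓ i)) = 0) ↔ f ∈ I) ↔
    (∀ φ : Module.Dual K (MvPolynomial (Fin n) K ⧸ I),
        ∃ g : Fin s → MvPolynomial (Fin n) K ⧸ I,
          φ = ∑ i, (ℓ i).comp (LinearMap.mulLeft K (g i))) := by
  classical
  have key : ∀ f : MvPolynomial (Fin n) K,
      (∀ i, seqAct f (useq I (ℓ i)) = 0) ↔
      Ideal.Quotient.mk I f ∈ (LinearMap.range (Lmap I s ℓ)).dualCoannihilator := by
    intro f
    rw [Submodule.mem_dualCoannihilator]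
    constructor
    · intro h φ hφ
      obtain ⟨g, rfl⟩ := hφ
      have h' : ∀ i, (ℓ i).comp (LinearMap.mulLeft K (Ideal.Quotient.mk I f)) = 0 := by
        intro i
        rw [← useq_eq_zero_iff I, ← seqAct_useq]
        exact h i
      rw [Lmap_apply, LinearMap.sum_apply]
      refine Finset.sum_eq_zero fun i _ => ?_
      have := congrArg (fun ψ => ψ (g i)) (h' i)
      simpa [mul_comm] using this
    · intro h i
      rw [seqAct_useq, useq_eq_zero_iff]
      ext q
      have h1 : Lmap I s ℓ (Pi.single i q) (Ideal.Quotient.mk I f) = 0 := h _ ⟨_, rfl⟩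
      rw [Lmap_apply, LinearMap.sum_apply, Finset.sum_eq_single i] at h1
      · simp only [LinearMap.comp_apply, LinearMap.mulLeft_apply, Pi.single_eq_same] at h1
        simp only [LinearMap.comp_apply, LinearMap.mulLeft_apply, LinearMap.zero_apply]
        rw [mul_comm, h1]
      · intro j _ hj
        simp [Pi.single_eq_of_ne hj]
      · intro hi
        exact absurd (Finset.mem_univ i) hi
  constructor
  · intro H φ
    have hco : (LinearMap.range (Lmap I s ℓ)).dualCoannihilator = ⊥ := by
      rw [Submodule.eq_bot_iff]
      intro q hq
      obtain ⟨f, rfl⟩ := Ideal.Quotient.mk_surjective q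
      exact (Ideal.Quotient.eq_zero_iff_mem).mpr ((H f).mp ((key f).mpr hq))
    have htop : LinearMap.range (Lmap I s ℓ) = ⊤ := by
      have h1 := Subspace.finrank_add_finrank_dualCoannihilator_eq
        (LinearMap.range (Lmap I s ℓ))
      rw [hco, finrank_bot, add_zero] at h1
      apply Submodule.eq_top_of_finrank_eq
      rw [h1, Subspace.dual_finrank_eq]
    obtain ⟨g, hg⟩ := LinearMap.range_eq_top.mp htop φ
    rw [Lmap_apply] at hg
    exact ⟨g, hg.symm⟩
  · intro H f
    rw [key f, Submodule.mem_dualCoannihilator]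
    constructor
    · intro h
      rw [← Ideal.Quotient.eq_zero_iff_mem,
        ← Module.forall_dual_apply_eq_zero_iff K]
      intro φ
      obtain ⟨g, hg⟩ := H φ
      rw [hg, ← Lmap_apply I s ℓ g]
      exact h _ ⟨g, rfl⟩
    · intro hf φ hφ
      rw [Ideal.Quotient.eq_zero_iff_mem.mpr hf, map_zero]
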